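/- There exist constants K₀, K₁, K₂ > 0 such that for every real number s, K₀ · β(s)² − K₁ ≤ 𝔅(s) ≤ K₂ · s², where 𝔅(s) = ∫₀ˢ ζ(q) β'(q) dq. (One may take K₂ = L_ζ L_β / 2, K₀ = M₀/(4 L_β), and K₁ = (M₀/(4 L_β)) · max_{[−S,S]} β², where S > 0 is chosen so that |ζ(q)| ≥ (M₀/2)|q| for |q| ≥ S.) -/

import Mathlib

open MeasureTheory intervalIntegral

section Auxiliary

open Set Filter Topology

lemma deriv_abs_le_of_lipschitz {f : ℝ → ℝ} {L : NNReal} (hf : LipschitzWith L f) (x : ℝ) :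
    |deriv f x| ≤ L := by
  by_cases h : DifferentiableAt ℝ f x
  · have h1 : ‖fderiv ℝ f x‖ ≤ L := norm_fderiv_le_of_lipschitz ℝ hf
    calc |deriv f x| = ‖fderiv ℝ f x 1‖ := by rw [fderiv_apply_one_eq_deriv]; rfl
    _ ≤ ‖fderiv ℝ f x‖ * ‖(1:ℝ)‖ := (fderiv ℝ f x).le_opNorm 1
    _ ≤ L := by simpa using h1
  · simp [deriv_zero_of_not_differentiableAt h]

lemma monotone_deriv_nonneg {f : ℝ → ℝ} (hf : Monotone f) (x : ℝ) : 0 ≤ deriv f x := by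
  by_cases h : DifferentiableAt ℝ f x
  · have hd := h.hasDerivAt
    rw [hasDerivAt_iff_tendsto_slope] at hd
    refine ge_of_tendsto hd ?_
    filter_upwards [self_mem_nhdsWithin] with y hy
    rcases lt_or_gt_of_ne (hy : y ≠ x) with h1 | h1
    · have : f y ≤ f x := hf h1.le
      have hyx : y - x < 0 := by linarith
      simp only [slope_def_field]
      rw [div_nonneg_iff]
      right
      constructor <;> [linarith; linarith]
    · have : f x ≤ f y := hf h1.le
      have hyx : 0 < y - x := by linarith
      simp only [slope_def_field]
      apply div_nonneg <;> linarith
  · simp [deriv_zero_of_not_differentiableAt h]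

lemma intervalIntegrable_mul_of_bounded {g φ : ℝ → ℝ} (hg : Continuous g) (hφ : Measurable φ)
    {C : ℝ} (hC : ∀ x, |φ x| ≤ C) (a b : ℝ) :
    IntervalIntegrable (fun q => g q * φ q) volume a b := by
  rw [intervalIntegrable_iff]
  obtain ⟨D, hD⟩ := (isCompact_uIcc (a := a) (b := b)).exists_bound_of_continuousOn
    hg.continuousOn
  apply Measure.integrableOn_of_bounded (M := D * C)
  · exact (measure_Ioc_lt_top).ne
  · exact (hg.measurable.mul hφ).aestronglyMeasurable
  · filter_upwards [ae_restrict_mem measurableSet_uIoc] with x hx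
    have h1 : ‖g x‖ ≤ D := hD x (uIoc_subset_uIcc hx)
    have h2 : |φ x| ≤ C := hC x
    have h3 : (0:ℝ) ≤ ‖g x‖ := norm_nonneg _
    calc ‖g x * φ x‖ = ‖g x‖ * |φ x| := by rw [norm_mul]; rfl
    _ ≤ D * C := mul_le_mul h1 h2 (abs_nonneg _) (le_trans h3 h1)

lemma lipschitz_integral_deriv {f : ℝ → ℝ} {L : NNReal} (hf : LipschitzWith L f)
    (a b : ℝ) : ∫ x in a..b, deriv f x = f b - f a := by
  set F : ℕ → ℝ → ℝ := fun n x => (f (x + 1/(n+1)) - f x) * (n+1) with hF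
  have hfc : Continuous f := hf.continuous
  -- convergence of integrals to ∫ deriv
  have hderiv_int : Tendsto (fun n => ∫ x in a..b, F n x) atTop (𝓝 (∫ x in a..b, deriv f x)) := by
    apply intervalIntegral.tendsto_integral_filter_of_dominated_convergence (bound := fun _ => (L:ℝ))
    · filter_upwards with n
      have c1 : Continuous fun x : ℝ => f (x + 1/((n:ℝ)+1)) :=
        hfc.comp (continuous_add_right _)
      exact ((c1.sub hfc).mul continuous_const).aestronglyMeasurable.restrict
    · filter_upwards with n
      filter_upwards with x _
      have h1 : |f (x + 1/(n+1)) - f x| ≤ L * (1/(n+1)) := by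
        have := hf.dist_le_mul (x + 1/(n+1)) x
        rw [Real.dist_eq, Real.dist_eq, add_sub_cancel_left,
          abs_of_pos (by positivity : (0:ℝ) < 1/((n:ℝ)+1))] at this
        exact this
      have h2 : (0:ℝ) < (n:ℝ)+1 := by positivity
      rw [Real.norm_eq_abs, abs_mul, abs_of_nonneg h2.le]
      calc |f (x + 1/(n+1)) - f x| * ((n:ℝ)+1) ≤ (L * (1/(n+1))) * ((n:ℝ)+1) := by
            exact mul_le_mul_of_nonneg_right h1 h2.le
      _ = L := by field_simp
    · exact intervalIntegrable_const
    · filter_upwards [hf.ae_differentiableAt_of_real] with x hx _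
      have hd := hx.hasDerivAt
      rw [hasDerivAt_iff_tendsto_slope] at hd
      have hseq : Tendsto (fun n : ℕ => x + 1/(n+1)) atTop (𝓝[≠] x) := by
        apply tendsto_nhdsWithin_of_tendsto_nhds_of_eventually_within
        · have : Tendsto (fun n : ℕ => 1/((n:ℝ)+1)) atTop (𝓝 0) :=
            tendsto_one_div_add_atTop_nhds_zero_nat
          simpa using tendsto_const_nhds.add this
        · filter_upwards with n
          have : (0:ℝ) < 1/((n:ℝ)+1) := by positivity
          simp only [mem_compl_iff, mem_singleton_iff]
          intro h
          nlinarith [congrArg (· - x) h]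
      have := hd.comp hseq
      convert this using 2 with n
      have h2 : (0:ℝ) < (n:ℝ)+1 := by positivity
      simp only [Function.comp, hF, slope_def_field, add_sub_cancel_left]
      rw [div_div_eq_mul_div, div_one]
  -- computation of ∫ F n
  have hcomp : ∀ n : ℕ, ∫ x in a..b, F n x =
      ((∫ x in b..(b+1/(n+1)), f x) - ∫ x in a..(a+1/(n+1)), f x) * (n+1) := by
    intro n
    have hii : ∀ u v : ℝ, IntervalIntegrable f volume u v := fun u v =>
      hfc.intervalIntegrable u v
    have e1 : ∫ x in a..b, F n x = ((∫ x in a..b, f (x + 1/(n+1))) - ∫ x in a..b, f x) * (n+1) := by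
      have c1 : Continuous fun x : ℝ => f (x + 1/((n:ℝ)+1)) :=
        hfc.comp (continuous_add_right _)
      rw [hF]
      rw [intervalIntegral.integral_mul_const, intervalIntegral.integral_sub
        (c1.intervalIntegrable a b) (hii a b)]
    have e2 : (∫ x in a..b, f (x + 1/(n+1))) = ∫ x in (a+1/(n+1))..(b+1/(n+1)), f x :=
      intervalIntegral.integral_comp_add_right f _
    have e3 : (∫ x in a..(a+1/(n+1)), f x) + (∫ x in (a+1/(n+1))..(b+1/(n+1)), f x)
        = (∫ x in a..b, f x) + ∫ x in b..(b+1/(n+1)), f x := by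
      rw [intervalIntegral.integral_add_adjacent_intervals (hii _ _) (hii _ _),
        intervalIntegral.integral_add_adjacent_intervals (hii _ _) (hii _ _)]
    have e4 : (∫ x in (a+1/((n:ℝ)+1))..(b+1/((n:ℝ)+1)), f x) - ∫ x in a..b, f x
        = (∫ x in b..(b+1/((n:ℝ)+1)), f x) - ∫ x in a..(a+1/((n:ℝ)+1)), f x := by linarith
    rw [e1, e2, e4]
  -- limit of ∫ F n is f b - f a
  have hlim2 : Tendsto (fun n => ∫ x in a..b, F n x) atTop (𝓝 (f b - f a)) := by
    have key : ∀ n : ℕ, ‖(∫ x in a..b, F n x) - (f b - f a)‖ ≤ 2 * L * (1/((n:ℝ)+1)) := by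
      intro n
      have hpos : (0:ℝ) < 1/((n:ℝ)+1) := by positivity
      set h : ℝ := 1/((n:ℝ)+1) with hh
      have hmul : h * ((n:ℝ)+1) = 1 := by rw [hh]; field_simp
      have claim : ∀ c : ℝ, |(∫ x in c..(c+h), f x) * ((n:ℝ)+1) - f c| ≤ L * h := by
        intro c
        have e : (∫ x in c..(c+h), f x) - h * f c = ∫ x in c..(c+h), (f x - f c) := by
          rw [intervalIntegral.integral_sub (hfc.intervalIntegrable _ _)
            intervalIntegrable_const, intervalIntegral.integral_const]
          simp [smul_eq_mul]
        have hbnd : ∀ x ∈ Set.uIoc c (c+h), ‖f x - f c‖ ≤ (L:ℝ) * h := by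
          intro x hx
          rw [Set.uIoc_of_le (by linarith : c ≤ c + h)] at hx
          have h1 : |f x - f c| ≤ (L:ℝ) * |x - c| := by
            have := hf.dist_le_mul x c
            rwa [Real.dist_eq, Real.dist_eq] at this
          have h2 : |x - c| ≤ h := by
            rw [abs_of_pos (by linarith [hx.1] : 0 < x - c)]
            linarith [hx.2]
          calc ‖f x - f c‖ = |f x - f c| := rfl
          _ ≤ (L:ℝ) * |x - c| := h1
          _ ≤ (L:ℝ) * h := by
            exact mul_le_mul_of_nonneg_left h2 (L.coe_nonneg)
        have hnorm : ‖∫ x in c..(c+h), (f x - f c)‖ ≤ ((L:ℝ) * h) * |c + h - c| :=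
          intervalIntegral.norm_integral_le_of_norm_le_const hbnd
        rw [← e] at hnorm
        have e2 : (∫ x in c..(c+h), f x) * ((n:ℝ)+1) - f c
            = ((∫ x in c..(c+h), f x) - h * f c) * ((n:ℝ)+1) := by
          have : h * f c * ((n:ℝ)+1) = f c := by
            rw [mul_comm h (f c), mul_assoc, hmul, mul_one]
          rw [sub_mul, this]
        rw [e2, abs_mul, abs_of_pos (by positivity : (0:ℝ) < (n:ℝ)+1)]
        have : |(∫ x in c..(c+h), f x) - h * f c| ≤ (L:ℝ) * h * h := by
          rw [add_sub_cancel_left, abs_of_pos hpos] at hnorm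
          exact hnorm
        calc |(∫ x in c..(c+h), f x) - h * f c| * ((n:ℝ)+1)
            ≤ ((L:ℝ) * h * h) * ((n:ℝ)+1) := by
              exact mul_le_mul_of_nonneg_right this (by positivity)
        _ = (L:ℝ) * h := by rw [mul_assoc, hmul, mul_one]
      rw [hcomp n]
      have hb := claim b
      have ha := claim a
      have e5 : ((∫ x in b..(b+h), f x) - ∫ x in a..(a+h), f x) * ((n:ℝ)+1) - (f b - f a)
          = ((∫ x in b..(b+h), f x) * ((n:ℝ)+1) - f b)
            - ((∫ x in a..(a+h), f x) * ((n:ℝ)+1) - f a) := by ring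
      rw [Real.norm_eq_abs, e5]
      calc |((∫ x in b..(b+h), f x) * ((n:ℝ)+1) - f b)
            - ((∫ x in a..(a+h), f x) * ((n:ℝ)+1) - f a)|
          ≤ |(∫ x in b..(b+h), f x) * ((n:ℝ)+1) - f b|
            + |(∫ x in a..(a+h), f x) * ((n:ℝ)+1) - f a| := abs_sub _ _
      _ ≤ (L:ℝ) * h + (L:ℝ) * h := add_le_add hb ha
      _ = 2 * (L:ℝ) * h := by ring
    have hz : Tendsto (fun n : ℕ => 2 * (L:ℝ) * (1/((n:ℝ)+1))) atTop (𝓝 0) := by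
      have : Tendsto (fun n : ℕ => 1/((n:ℝ)+1)) atTop (𝓝 0) :=
        tendsto_one_div_add_atTop_nhds_zero_nat
      simpa using this.const_mul (2 * (L:ℝ))
    have := squeeze_zero_norm key hz
    have h2 := this.add (tendsto_const_nhds (x := f b - f a))
    simpa using h2
  exact tendsto_nhds_unique hderiv_int hlim2

lemma integral_mul_deriv_sq {β : ℝ → ℝ} {L : NNReal} (hβ : LipschitzWith L β) (hβ0 : β 0 = 0)
    (s : ℝ) : ∫ q in (0:ℝ)..s, β q * deriv β q = (β s)^2 / 2 := by
  set C : ℝ := (L:ℝ) * (|s| + 1) with hCdef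
  have hC0 : 0 ≤ C := by positivity
  set t : ℝ → ℝ := fun z => max (-C) (min z C) with htdef
  set ψ : ℝ → ℝ := fun z => (t z)^2 with hψdef
  have htabs : ∀ z, |t z| ≤ C := by
    intro z
    rw [abs_le]
    exact ⟨le_max_left _ _, max_le (by linarith) (min_le_right _ _)⟩
  have htlip : ∀ u v : ℝ, |t u - t v| ≤ |u - v| := by
    intro u v
    have s1 : |t u - t v| ≤ |min u C - min v C| := by
      rw [htdef]
      simp only [max_comm (-C)]
      exact abs_max_sub_max_le_abs _ _ _
    have s2 : |min u C - min v C| ≤ |u - v| := by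
      have e1 : min u C = -max (-u) (-C) := by rw [max_neg_neg]; ring
      have e2 : min v C = -max (-v) (-C) := by rw [max_neg_neg]; ring
      rw [e1, e2]
      have := abs_max_sub_max_le_abs (-u) (-v) (-C)
      calc |-max (-u) (-C) - -max (-v) (-C)| = |max (-u) (-C) - max (-v) (-C)| := by
            rw [← abs_neg]; ring_nf
      _ ≤ |-u - -v| := this
      _ = |u - v| := by rw [← abs_neg]; ring_nf
    exact s1.trans s2
  have hψlip : LipschitzWith (2*C).toNNReal ψ := by
    apply LipschitzWith.of_dist_le_mul
    intro u v
    rw [Real.dist_eq, Real.dist_eq, Real.coe_toNNReal _ (by linarith)]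
    have e : ψ u - ψ v = (t u + t v) * (t u - t v) := by rw [hψdef]; ring
    rw [e, abs_mul]
    have h1 : |t u + t v| ≤ 2 * C := by
      calc |t u + t v| ≤ |t u| + |t v| := abs_add_le _ _
      _ ≤ 2 * C := by linarith [htabs u, htabs v]
    exact mul_le_mul h1 (htlip u v) (abs_nonneg _) (by linarith)
  have hflip : LipschitzWith ((2*C).toNNReal * L) (fun q => ψ (β q)) := hψlip.comp hβ
  have hβabs : ∀ x, |β x| ≤ (L:ℝ) * |x| := by
    intro x
    have := hβ.dist_le_mul x 0
    rwa [Real.dist_eq, Real.dist_eq, hβ0, sub_zero, sub_zero] at this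
  have hclamp : ∀ z : ℝ, |z| ≤ C → t z = z := by
    intro z hz
    rw [abs_le] at hz
    rw [htdef]
    simp only
    rw [min_eq_left hz.2, max_eq_right hz.1]
  -- FTC for ψ ∘ β
  have h1 : ∫ q in (0:ℝ)..s, deriv (fun q => ψ (β q)) q = (β s)^2 := by
    rw [lipschitz_integral_deriv hflip 0 s]
    have hfs : ψ (β s) = (β s)^2 := by
      rw [hψdef]; simp only
      rw [hclamp (β s) ((hβabs s).trans (by rw [hCdef]; nlinarith [NNReal.coe_nonneg L]))]
    have hf0 : ψ (β 0) = 0 := by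
      rw [hβ0, hψdef]; simp only
      rw [hclamp 0 (by simpa using hC0)]
      norm_num
    rw [hfs, hf0, sub_zero]
  -- a.e. equality of derivatives on the interval
  have h2 : ∀ᵐ q : ℝ, q ∈ Set.uIoc (0:ℝ) s →
      2 * (β q * deriv β q) = deriv (fun q => ψ (β q)) q := by
    filter_upwards [hβ.ae_differentiableAt_of_real] with q hq hqι
    have habs : |q| ≤ |s| := by
      rcases le_or_gt 0 s with hs | hs
      · rw [Set.uIoc_of_le hs] at hqι
        rw [abs_le]
        constructor
        · linarith [hqι.1, abs_nonneg s]
        · linarith [hqι.2, le_abs_self s]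
      · rw [Set.uIoc_of_ge hs.le] at hqι
        rw [abs_le]
        constructor
        · linarith [hqι.1, neg_abs_le s]
        · linarith [hqι.2, abs_nonneg s]
    have feq : (fun x => ψ (β x)) =ᶠ[nhds q] fun x => (β x)^2 := by
      have hmem : Set.Ioo (q-1) (q+1) ∈ nhds q := Ioo_mem_nhds (by linarith) (by linarith)
      filter_upwards [hmem] with x hx
      have hxabs : |x| ≤ |q| + 1 := by
        have h3 : |x - q| ≤ 1 := by
          rw [abs_le]; constructor <;> [linarith [hx.1]; linarith [hx.2]]
        calc |x| = |q + (x - q)| := by ring_nf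
        _ ≤ |q| + |x - q| := abs_add_le _ _
        _ ≤ |q| + 1 := by linarith
      have : |β x| ≤ C := by
        calc |β x| ≤ (L:ℝ) * |x| := hβabs x
        _ ≤ (L:ℝ) * (|q| + 1) := by
            exact mul_le_mul_of_nonneg_left hxabs (NNReal.coe_nonneg L)
        _ ≤ C := by rw [hCdef]; nlinarith [NNReal.coe_nonneg L]
      rw [hψdef]; simp only
      rw [hclamp _ this]
    rw [feq.deriv_eq]
    have := (hq.hasDerivAt.pow 2).deriv
    rw [show (fun x => β x ^ 2) = β ^ 2 from rfl, this]
    ring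
  have h3 : ∫ q in (0:ℝ)..s, 2 * (β q * deriv β q) = (β s)^2 := by
    rw [intervalIntegral.integral_congr_ae h2, h1]
  have h4 : ∫ q in (0:ℝ)..s, 2 * (β q * deriv β q)
      = 2 * ∫ q in (0:ℝ)..s, β q * deriv β q := intervalIntegral.integral_const_mul _ _
  rw [h4] at h3
  linarith

end Auxiliary

/-- There exist constants `K₀, K₁, K₂ > 0` such that for every real `s`,
`K₀ * (β s)² - K₁ ≤ 𝔅 s ≤ K₂ * s²`, where `𝔅 s = ∫ q in 0..s, ζ q * β' q`. -/
theorem stmt4 (β ζ : ℝ → ℝ) (Lβ Lζ : ℝ) (hLβ : 0 < Lβ) (hLζ : 0 < Lζ)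
    (hβmono : Monotone β) (hζmono : Monotone ζ)
    (hβlip : LipschitzWith Lβ.toNNReal β) (hζlip : LipschitzWith Lζ.toNNReal ζ)
    (hβ0 : β 0 = 0) (hζ0 : ζ 0 = 0)
    (M₀ M₁ : ℝ) (hM₀ : 0 < M₀) (hM₁ : 0 < M₁)
    (hgrow : ∀ s : ℝ, M₀ * |s| - M₁ ≤ |ζ s|)
    (𝔅 : ℝ → ℝ) (h𝔅 : ∀ s : ℝ, 𝔅 s = ∫ q in (0:ℝ)..s, ζ q * deriv β q) :
    ∃ K₀ K₁ K₂ : ℝ, 0 < K₀ ∧ 0 < K₁ ∧ 0 < K₂ ∧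
      ∀ s : ℝ, K₀ * (β s) ^ 2 - K₁ ≤ 𝔅 s ∧ 𝔅 s ≤ K₂ * s ^ 2 := by
  have hLβ' : (Lβ.toNNReal : ℝ) = Lβ := Real.coe_toNNReal _ hLβ.le
  have hLζ' : (Lζ.toNNReal : ℝ) = Lζ := Real.coe_toNNReal _ hLζ.le
  set c : ℝ := M₀ / (2*Lβ) with hc
  have hc0 : 0 < c := by positivity
  set S : ℝ := 2*M₁/M₀ with hS
  have hS0 : 0 < S := by positivity
  refine ⟨M₀/(4*Lβ), (c/2)*(Lβ*S)^2 + 1, Lζ*Lβ/2, by positivity, by positivity, by positivity, ?_⟩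
  have hK0 : M₀/(4*Lβ) = c/2 := by rw [hc]; ring
  -- pointwise facts
  have hd0 : ∀ q, 0 ≤ deriv β q := monotone_deriv_nonneg hβmono
  have hdabs : ∀ q, |deriv β q| ≤ Lβ := fun q => by
    have := deriv_abs_le_of_lipschitz hβlip q; rwa [hLβ'] at this
  have hdL : ∀ q, deriv β q ≤ Lβ := fun q => (abs_le.mp (hdabs q)).2
  have hβabs : ∀ x, |β x| ≤ Lβ * |x| := fun x => by
    have := hβlip.dist_le_mul x 0
    rwa [Real.dist_eq, Real.dist_eq, hβ0, sub_zero, sub_zero, hLβ'] at this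
  have hζabs : ∀ x, |ζ x| ≤ Lζ * |x| := fun x => by
    have := hζlip.dist_le_mul x 0
    rwa [Real.dist_eq, Real.dist_eq, hζ0, sub_zero, sub_zero, hLζ'] at this
  have hζnn : ∀ q, 0 ≤ q → 0 ≤ ζ q := fun q hq => hζ0 ▸ hζmono hq
  have hζnp : ∀ q, q ≤ 0 → ζ q ≤ 0 := fun q hq => hζ0 ▸ hζmono hq
  have hβsq : ∀ u : ℝ, (β u)^2 ≤ (Lβ * |u|)^2 := fun u => by
    nlinarith [hβabs u, abs_nonneg (β u), sq_abs (β u), abs_nonneg u]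
  -- integrability
  have Iζ : ∀ a b : ℝ, IntervalIntegrable (fun q => ζ q * deriv β q) volume a b := fun a b =>
    intervalIntegrable_mul_of_bounded hζlip.continuous (measurable_deriv β) hdabs a b
  have Iβ : ∀ a b : ℝ, IntervalIntegrable (fun q => β q * deriv β q) volume a b := fun a b =>
    intervalIntegrable_mul_of_bounded hβlip.continuous (measurable_deriv β) hdabs a b
  have Icβ : ∀ a b : ℝ, IntervalIntegrable (fun q => c * (β q * deriv β q)) volume a b :=
    fun a b => (Iβ a b).const_mul c
  have Ilin : ∀ a b : ℝ, IntervalIntegrable (fun q => Lζ * Lβ * q) volume a b := fun a b =>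
    (continuous_const.mul continuous_id).intervalIntegrable a b
  -- the β² identity
  have key : ∀ u v : ℝ, ∫ q in u..v, c * (β q * deriv β q)
      = c * ((β v)^2/2 - (β u)^2/2) := by
    intro u v
    have e2 : ∀ w : ℝ, ∫ q in (0:ℝ)..w, c * (β q * deriv β q) = c * ((β w)^2/2) := fun w => by
      rw [intervalIntegral.integral_const_mul, integral_mul_deriv_sq hβlip hβ0 w]
    have e1 : (∫ q in (0:ℝ)..u, c * (β q * deriv β q))
        + (∫ q in u..v, c * (β q * deriv β q)) = ∫ q in (0:ℝ)..v, c * (β q * deriv β q) :=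
      intervalIntegral.integral_add_adjacent_intervals (Icβ 0 u) (Icβ u v)
    rw [e2 u, e2 v] at e1
    linarith
  -- nonnegativity of 𝔅
  have hBnn : ∀ u : ℝ, 0 ≤ 𝔅 u := by
    intro u
    rcases le_or_gt 0 u with hu | hu
    · rw [h𝔅]
      exact intervalIntegral.integral_nonneg hu fun q hq => mul_nonneg (hζnn q hq.1) (hd0 q)
    · rw [h𝔅, intervalIntegral.integral_symm]
      have h1 : ∫ q in u..(0:ℝ), (fun q => -(ζ q * deriv β q)) q ≤ - ∫ q in u..(0:ℝ), ζ q * deriv β q := by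
        rw [intervalIntegral.integral_neg]
      have h2 : 0 ≤ ∫ q in u..(0:ℝ), (fun q => -(ζ q * deriv β q)) q :=
        intervalIntegral.integral_nonneg hu.le fun q hq => by
          have := mul_nonpos_of_nonpos_of_nonneg (hζnp q hq.2) (hd0 q)
          simpa using this
      linarith
  intro s
  constructor
  · -- lower bound
    rcases le_or_gt s S with hsS | hsS
    · rcases le_or_gt (-S) s with hsS' | hsS'
      · -- |s| ≤ S : use 𝔅 s ≥ 0
        have habs : |s| ≤ S := abs_le.mpr ⟨by linarith, hsS⟩
        have h1 : (β s)^2 ≤ (Lβ*S)^2 := by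
          refine (hβsq s).trans ?_
          have h0 : Lβ*|s| ≤ Lβ*S := mul_le_mul_of_nonneg_left habs hLβ.le
          have h0' : (0:ℝ) ≤ Lβ*|s| := by positivity
          nlinarith
        have := hBnn s
        rw [hK0]
        linarith [mul_le_mul_of_nonneg_left h1 hc0.le]
      · -- s < -S
        have split : 𝔅 s = (∫ q in (0:ℝ)..(-S), ζ q * deriv β q)
            + ∫ q in (-S)..s, ζ q * deriv β q := by
          rw [h𝔅, intervalIntegral.integral_add_adjacent_intervals (Iζ 0 (-S)) (Iζ (-S) s)]
        have part1 : 0 ≤ ∫ q in (0:ℝ)..(-S), ζ q * deriv β q := by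
          rw [intervalIntegral.integral_symm]
          have h1 : ∫ q in (-S)..(0:ℝ), (fun q => -(ζ q * deriv β q)) q
              = - ∫ q in (-S)..(0:ℝ), ζ q * deriv β q := intervalIntegral.integral_neg
          have h2 : 0 ≤ ∫ q in (-S)..(0:ℝ), (fun q => -(ζ q * deriv β q)) q :=
            intervalIntegral.integral_nonneg (by linarith) fun q hq => by
              have := mul_nonpos_of_nonpos_of_nonneg (hζnp q hq.2) (hd0 q)
              simpa using this
          linarith
        have ptwise : ∀ q ∈ Set.Icc s (-S), ζ q * deriv β q ≤ c * (β q * deriv β q) := by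
          intro q hq
          have hqS : q ≤ -S := hq.2
          have hq0 : q ≤ 0 := by linarith
          have h1 : ζ q ≤ M₁ + M₀ * q := by
            have hg := hgrow q
            rw [abs_of_nonpos hq0, abs_of_nonpos (hζnp q hq0)] at hg
            linarith
          have h2 : M₀ * q ≤ -(2*M₁) := by
            have := mul_le_mul_of_nonneg_left hqS hM₀.le
            rw [hS] at this
            have h3 : M₀ * -(2*M₁/M₀) = -(2*M₁) := by field_simp
            linarith
          have h4 : Lβ * q ≤ β q := by
            have := hβabs q
            rw [abs_of_nonpos hq0] at this
            have h5 := neg_abs_le (β q)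
            have h6 := abs_nonneg (β q)
            nlinarith [le_abs_self (β q), neg_abs_le (β q)]
          have h7 : M₀ * q / 2 ≤ c * β q := by
            have := mul_le_mul_of_nonneg_left h4 hc0.le
            have h8 : c * (Lβ * q) = M₀ * q / 2 := by rw [hc]; field_simp
            linarith
          have h9 : ζ q ≤ c * β q := by linarith
          calc ζ q * deriv β q ≤ (c * β q) * deriv β q :=
                mul_le_mul_of_nonneg_right h9 (hd0 q)
          _ = c * (β q * deriv β q) := by ring
        have part2 : ∫ q in (-S)..s, c * (β q * deriv β q)
            ≤ ∫ q in (-S)..s, ζ q * deriv β q := by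
          rw [intervalIntegral.integral_symm, intervalIntegral.integral_symm s (-S)]
          have := intervalIntegral.integral_mono_on hsS'.le (Iζ s (-S)) (Icβ s (-S)) ptwise
          linarith
        have part3 := key (-S) s
        have hβS : (β (-S))^2 ≤ (Lβ*S)^2 := by
          have := hβsq (-S)
          rwa [abs_neg, abs_of_pos hS0] at this
        rw [split, hK0]
        linarith [part1, part2, part3, mul_le_mul_of_nonneg_left hβS hc0.le]
    · -- S < s
      have split : 𝔅 s = (∫ q in (0:ℝ)..S, ζ q * deriv β q)
          + ∫ q in S..s, ζ q * deriv β q := by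
        rw [h𝔅, intervalIntegral.integral_add_adjacent_intervals (Iζ 0 S) (Iζ S s)]
      have part1 : 0 ≤ ∫ q in (0:ℝ)..S, ζ q * deriv β q :=
        intervalIntegral.integral_nonneg hS0.le fun q hq => mul_nonneg (hζnn q hq.1) (hd0 q)
      have ptwise : ∀ q ∈ Set.Icc S s, c * (β q * deriv β q) ≤ ζ q * deriv β q := by
        intro q hq
        have hqS : S ≤ q := hq.1
        have hq0 : 0 ≤ q := hS0.le.trans hqS
        have h1 : M₀ * q - M₁ ≤ ζ q := by
          have hg := hgrow q
          rwa [abs_of_nonneg hq0, abs_of_nonneg (hζnn q hq0)] at hg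
        have h2 : 2*M₁ ≤ M₀ * q := by
          have := mul_le_mul_of_nonneg_left hqS hM₀.le
          rw [hS] at this
          have h3 : M₀ * (2*M₁/M₀) = 2*M₁ := by field_simp
          linarith
        have h4 : β q ≤ Lβ * q := by
          have := hβabs q
          rw [abs_of_nonneg hq0] at this
          linarith [le_abs_self (β q)]
        have h7 : c * β q ≤ M₀ * q / 2 := by
          have := mul_le_mul_of_nonneg_left h4 hc0.le
          have h8 : c * (Lβ * q) = M₀ * q / 2 := by rw [hc]; field_simp
          linarith
        have h9 : c * β q ≤ ζ q := by linarith
        calc c * (β q * deriv β q) = (c * β q) * deriv β q := by ring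
        _ ≤ ζ q * deriv β q := mul_le_mul_of_nonneg_right h9 (hd0 q)
      have part2 : ∫ q in S..s, c * (β q * deriv β q) ≤ ∫ q in S..s, ζ q * deriv β q :=
        intervalIntegral.integral_mono_on hsS.le (Icβ S s) (Iζ S s) ptwise
      have part3 := key S s
      have hβS : (β S)^2 ≤ (Lβ*S)^2 := by
        have := hβsq S
        rwa [abs_of_pos hS0] at this
      rw [split, hK0]
      linarith [part1, part2, part3, mul_le_mul_of_nonneg_left hβS hc0.le]
  · -- upper bound
    rcases le_or_gt 0 s with hs | hs
    · have mono : 𝔅 s ≤ ∫ q in (0:ℝ)..s, Lζ*Lβ*q := by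
        rw [h𝔅]
        apply intervalIntegral.integral_mono_on hs (Iζ 0 s) (Ilin 0 s)
        intro q hq
        have hq0 : 0 ≤ q := hq.1
        have h1 : ζ q ≤ Lζ * q := by
          have := hζabs q
          rw [abs_of_nonneg hq0, abs_of_nonneg (hζnn q hq0)] at this
          exact this
        have h2 : 0 ≤ Lζ * q := (hζnn q hq0).trans h1
        calc ζ q * deriv β q ≤ (Lζ * q) * deriv β q :=
              mul_le_mul_of_nonneg_right h1 (hd0 q)
        _ ≤ (Lζ * q) * Lβ := mul_le_mul_of_nonneg_left (hdL q) h2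
        _ = Lζ * Lβ * q := by ring
      have comp : ∫ q in (0:ℝ)..s, Lζ*Lβ*q = Lζ*Lβ/2 * s^2 := by
        rw [intervalIntegral.integral_const_mul, integral_id]
        ring
      linarith
    · have e : 𝔅 s = -(∫ q in s..(0:ℝ), ζ q * deriv β q) := by
        rw [h𝔅, intervalIntegral.integral_symm]
      have mono : (∫ q in s..(0:ℝ), Lζ*Lβ*q) ≤ ∫ q in s..(0:ℝ), ζ q * deriv β q := by
        apply intervalIntegral.integral_mono_on hs.le (Ilin s 0) (Iζ s 0)
        intro q hq
        have hq0 : q ≤ 0 := hq.2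
        have h1 : Lζ * q ≤ ζ q := by
          have := hζabs q
          rw [abs_of_nonpos hq0, abs_of_nonpos (hζnp q hq0)] at this
          linarith
        have h2 : Lζ * q ≤ 0 := h1.trans (hζnp q hq0)
        calc Lζ * Lβ * q = (Lζ * q) * Lβ := by ring
        _ ≤ (Lζ * q) * deriv β q := by
              nlinarith [hdL q, hd0 q]
        _ ≤ ζ q * deriv β q := mul_le_mul_of_nonneg_right h1 (hd0 q)
      have comp : ∫ q in s..(0:ℝ), Lζ*Lβ*q = -(Lζ*Lβ/2 * s^2) := by
        rw [intervalIntegral.integral_const_mul, integral_id]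
        ring
      rw [e]
      linarith
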